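/- Let A be an N×M complex matrix (viewed as a linear map from the Euclidean space ℂ^M to the Euclidean space ℂ^N), and let σ ≥ 0 be such that ‖Aᴴu‖ ≥ σ‖u‖ for every u ∈ ℂ^N. Let T ≥ 0 with σ ≤ √T. Then the worst-case residual after optimal cancellation satisfies: sup over all h ∈ ℂ^N with ‖h‖² ≤ T of (inf over all θ ∈ ℂ^M with ‖θ‖ ≤ 1 of ‖h + A·θ‖²) ≤ (√T − σ)². -/

import Mathlib

open Matrix

lemma exists_preimage_bound {E F : Type*} [NormedAddCommGroup E] [InnerProductSpace ℂ E]
    [NormedAddCommGroup F] [InnerProductSpace ℂ F] [FiniteDimensional ℂ E]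
    [FiniteDimensional ℂ F] (L : E →ₗ[ℂ] F) (σ : ℝ) (hσ : 0 < σ)
    (hadj : ∀ u, σ * ‖u‖ ≤ ‖LinearMap.adjoint L u‖) (h : F) :
    ∃ θ, L θ = h ∧ σ * ‖θ‖ ≤ ‖h‖ := by
  set S : F →ₗ[ℂ] F := L ∘ₗ LinearMap.adjoint L with hS
  have hinj : Function.Injective S := by
    rw [← LinearMap.ker_eq_bot, LinearMap.ker_eq_bot']
    intro u hu
    have h1 : (inner ℂ (S u) u : ℂ) = 0 := by rw [hu]; simp
    have h2 : ‖LinearMap.adjoint L u‖ ^ 2 = 0 := by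
      rw [hS] at h1
      simp only [LinearMap.comp_apply] at h1
      have h3 : (inner ℂ (LinearMap.adjoint L u) (LinearMap.adjoint L u) : ℂ) = 0 := by
        rw [LinearMap.adjoint_inner_left, ← inner_conj_symm, h1, map_zero]
      have h4 := @inner_self_eq_norm_sq ℂ _ _ _ _ (LinearMap.adjoint L u)
      rw [← h4, h3]
      simp
    have h4 : ‖LinearMap.adjoint L u‖ = 0 := by nlinarith [norm_nonneg (LinearMap.adjoint L u)]
    have h5 := hadj u
    rw [h4] at h5
    have : ‖u‖ = 0 := by nlinarith [norm_nonneg u]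
    simpa using this
  have hsurj : Function.Surjective S := (LinearMap.injective_iff_surjective).mp hinj
  obtain ⟨u, hu⟩ := hsurj h
  refine ⟨LinearMap.adjoint L u, by rw [hS] at hu; simpa using hu, ?_⟩
  rcases eq_or_ne u 0 with rfl | hu0
  · have : h = 0 := by rw [← hu]; simp
    subst this
    simp
  · set θ := LinearMap.adjoint L u with hθ
    have key : ‖θ‖ ^ 2 ≤ ‖h‖ * ‖u‖ := by
      have h1 : (‖θ‖ : ℝ) ^ 2 = RCLike.re (inner (𝕜 := ℂ) θ θ) := by
        rw [@inner_self_eq_norm_sq ℂ]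
      have h2 : (inner (𝕜 := ℂ) θ θ) = inner (𝕜 := ℂ) h u := by
        rw [hθ, LinearMap.adjoint_inner_right, ← hu, hS]
        simp
      have h3 : RCLike.re (inner (𝕜 := ℂ) h u) ≤ ‖h‖ * ‖u‖ := re_inner_le_norm h u
      rw [h1, h2]; exact h3
    have hlow : σ * ‖u‖ ≤ ‖θ‖ := hadj u
    have hun : 0 < ‖u‖ := norm_pos_iff.mpr hu0
    nlinarith [norm_nonneg θ]

/-- Closed-form upper bound for the worst-case residual after optimal IRS
cancellation: `sup_{‖h‖² ≤ T} inf_{‖θ‖ ≤ 1} ‖h + A θ‖² ≤ (√T − σ)²`,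
where `σ` lower-bounds the smallest singular value of `A`. -/
theorem worst_case_residual_bound (N M : ℕ) (A : Matrix (Fin N) (Fin M) ℂ)
    (σ T : ℝ) (hσ : 0 ≤ σ) (hT : 0 ≤ T) (hσT : σ ≤ Real.sqrt T)
    (hmin : ∀ u : EuclideanSpace ℂ (Fin N), σ * ‖u‖ ≤ ‖Matrix.toEuclideanLin Aᴴ u‖) :
    (⨆ h : {h : EuclideanSpace ℂ (Fin N) // ‖h‖ ^ 2 ≤ T},
        ⨅ θ : {θ : EuclideanSpace ℂ (Fin M) // ‖θ‖ ≤ 1},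
          ‖(h : EuclideanSpace ℂ (Fin N)) + Matrix.toEuclideanLin A θ‖ ^ 2) ≤
      (Real.sqrt T - σ) ^ 2 := by
  have hne : Nonempty {h : EuclideanSpace ℂ (Fin N) // ‖h‖ ^ 2 ≤ T} :=
    ⟨⟨0, by simpa using hT⟩⟩
  have hneθ : Nonempty {θ : EuclideanSpace ℂ (Fin M) // ‖θ‖ ≤ 1} :=
    ⟨⟨0, by simp⟩⟩
  have hbdd : ∀ h : EuclideanSpace ℂ (Fin N),
      BddBelow (Set.range fun θ : {θ : EuclideanSpace ℂ (Fin M) // ‖θ‖ ≤ 1} =>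
        ‖h + Matrix.toEuclideanLin A θ‖ ^ 2) := by
    intro h
    exact ⟨0, by rintro x ⟨θ, rfl⟩; positivity⟩
  apply ciSup_le
  rintro ⟨h, hh⟩
  simp only
  rcases eq_or_lt_of_le hσ with hσ0 | hσ0
  · -- σ = 0 : take θ = 0
    have : (Real.sqrt T - σ) ^ 2 = T := by
      rw [← hσ0]; simp [Real.sq_sqrt hT]
    rw [this]
    refine le_trans (ciInf_le_of_le (hbdd h) ⟨0, by simp⟩ ?_) le_rfl
    simpa using hh
  · -- σ > 0
    have hadj : ∀ u, σ * ‖u‖ ≤ ‖LinearMap.adjoint (Matrix.toEuclideanLin A) u‖ := by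
      intro u
      rw [← Matrix.toEuclideanLin_conjTranspose_eq_adjoint]
      exact hmin u
    obtain ⟨θ0, hθ0, hθ0n⟩ := exists_preimage_bound (Matrix.toEuclideanLin A) σ hσ0 hadj h
    rcases le_or_gt ‖θ0‖ 1 with hle | hgt
    · refine le_trans (ciInf_le_of_le (hbdd h) ⟨-θ0, by simpa using hle⟩ ?_) (by positivity)
      simp [hθ0]
    · set c : ℂ := (‖θ0‖ : ℂ)⁻¹ with hc
      have hθn : ‖-(c • θ0)‖ ≤ 1 := by
        rw [norm_neg, norm_smul, hc]
        have : ‖((‖θ0‖ : ℂ))⁻¹‖ = (‖θ0‖)⁻¹ := by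
          rw [norm_inv, Complex.norm_real, Real.norm_eq_abs, abs_of_nonneg (norm_nonneg _)]
        rw [this, inv_mul_cancel₀ (by positivity)]
      refine le_trans (ciInf_le_of_le (hbdd h) ⟨-(c • θ0), hθn⟩ ?_) le_rfl
      have hLc : Matrix.toEuclideanLin A (-(c • θ0)) = -(c • h) := by
        rw [map_neg, LinearMap.map_smul, hθ0]
      rw [hLc]
      have heq : h + -(c • h) = (1 - c) • h := by
        rw [sub_smul, one_smul]; abel
      rw [heq, norm_smul]
      have hθ0pos : (0:ℝ) < ‖θ0‖ := lt_trans one_pos hgt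
      have hcn : ‖(1 : ℂ) - c‖ = 1 - (‖θ0‖)⁻¹ := by
        rw [hc]
        have : (1 : ℂ) - (‖θ0‖ : ℂ)⁻¹ = ((1 - (‖θ0‖)⁻¹ : ℝ) : ℂ) := by
          push_cast; ring
        rw [this, Complex.norm_real, Real.norm_eq_abs, abs_of_nonneg]
        have : (‖θ0‖)⁻¹ < 1 := by
          rw [inv_lt_one_iff₀]; right; exact hgt
        linarith
      rw [hcn]
      have hhT : ‖h‖ ≤ Real.sqrt T := by
        have := Real.sqrt_le_sqrt hh
        rwa [Real.sqrt_sq (norm_nonneg h)] at this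
      have h1 : (1 - (‖θ0‖)⁻¹) * ‖h‖ ≤ ‖h‖ - σ := by
        have hmi : ‖θ0‖ * (‖θ0‖)⁻¹ = 1 := mul_inv_cancel₀ (ne_of_gt hθ0pos)
        have : σ ≤ ‖h‖ * (‖θ0‖)⁻¹ := by
          nlinarith [inv_pos.mpr hθ0pos]
        nlinarith [inv_pos.mpr hθ0pos, norm_nonneg h]
      have h2 : 0 ≤ (1 - (‖θ0‖)⁻¹) * ‖h‖ := by
        have : (‖θ0‖)⁻¹ ≤ 1 := by
          rw [inv_le_one_iff₀]; right; linarith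
        have := norm_nonneg h
        nlinarith
      have h3 : (1 - (‖θ0‖)⁻¹) * ‖h‖ ≤ Real.sqrt T - σ := by linarith
      exact pow_le_pow_left₀ h2 h3 2
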